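/- arXiv:2502.13697 — 2 statements merged into one kernel-verified Lean document; each statement's English description precedes it below -/
import Mathlib

section
/- If the vMDP is regular, then every basic feasible solution x of the state-action frequency polytope satisfies: for each epoch t = 1,...,T-1 and each state j, there is exactly one action a' ∈ A_j with x_t(j,a') > 0, and x_t(j,a) = 0 for all other actions a. -/
open Finset

/-- A finite-horizon MDP with `N` states, horizon `T` (epochs `0,…,T-1`, so `T ≥ 2` has at
least one decision epoch), action sets `Fin (k s)` for each state `s`, and transition
probabilities `p t s a j = p_t(j | s, a)` governing the move from epoch `t` to `t+1`,
together with a strictly positive initial distribution `α`. -/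
structure MDP (N T : ℕ) (k : Fin N → ℕ) : Type where
  p : ℕ → (s : Fin N) → Fin (k s) → Fin N → ℝ
  α : Fin N → ℝ
  p_nonneg : ∀ t s a j, 0 ≤ p t s a j
  p_sum : ∀ t s a, ∑ j, p t s a j = 1
  α_pos : ∀ s, 0 < α s
  α_sum : ∑ s, α s = 1

/-- A (randomized, Markov, non-stationary) policy: `q t s a` is the probability that
action `a` is chosen in state `s` at decision epoch `t`. -/
structure Policy (N : ℕ) (k : Fin N → ℕ) : Type where
  q : ℕ → (s : Fin N) → Fin (k s) → ℝ
  q_nonneg : ∀ t s a, 0 ≤ q t s a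
  q_sum : ∀ t s, ∑ a, q t s a = 1

variable {N T : ℕ} {k : Fin N → ℕ}

/-- `condProb M π j t s` is `P^π(S_t = s | S_0 = j)` (epochs indexed from 0). -/
def condProb (M : MDP N T k) (π : Policy N k) (j : Fin N) : ℕ → Fin N → ℝ
  | 0, s => if s = j then 1 else 0
  | t+1, s => ∑ s', ∑ a, condProb M π j t s' * π.q t s' a * M.p t s' a s

/-- The state-action frequency `x_{π,t}(s,a) = ∑_j α(j) P^π(S_t = s, A_t = a | S_0 = j)`
(epochs indexed from 0, so the decision epochs are `0,…,T-2`). -/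
def xsa (M : MDP N T k) (π : Policy N k) (t : ℕ) (s : Fin N) (a : Fin (k s)) : ℝ :=
  ∑ j, M.α j * condProb M π j t s * π.q t s a

/-- The terminal state frequency `x_{π,T}(s)` (terminal epoch is `T-1` in 0-based indexing). -/
def xT (M : MDP N T k) (π : Policy N k) (s : Fin N) : ℝ :=
  ∑ j, M.α j * condProb M π j (T-1) s

variable (TT : ℕ)

/-- The finite-dimensional space housing state-action frequency vectors for a horizon
`TT + 2` process: a component `x.1 t s a` for every decision epoch `t ∈ {0,…,TT}`, state
`s` and action `a`, and a terminal component `x.2 s` for every state `s`. -/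
abbrev FreqSpace (N : ℕ) (k : Fin N → ℕ) (TT : ℕ) : Type :=
  (Fin (TT+1) → (s : Fin N) → Fin (k s) → ℝ) × (Fin N → ℝ)

/-- Membership in the state-action frequency polytope `P`: nonnegativity together with the
initial condition (a), flow conservation (b), and the terminal condition (c). -/
def inP {N : ℕ} {k : Fin N → ℕ} {TT : ℕ} (M : MDP N (TT+2) k)
    (x : FreqSpace N k TT) : Prop :=
  (∀ t s a, 0 ≤ x.1 t s a) ∧ (∀ s, 0 ≤ x.2 s) ∧
  (∀ j, ∑ a, x.1 0 j a = M.α j) ∧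
  (∀ (t : Fin TT) (j : Fin N),
    ∑ a, x.1 t.succ j a = ∑ s, ∑ a, M.p (t : ℕ) s a j * x.1 t.castSucc s a) ∧
  (∀ j, x.2 j = ∑ s, ∑ a, M.p TT s a j * x.1 (Fin.last TT) s a)

/-- The state-action frequency polytope `P`. -/
def Pset {N : ℕ} {k : Fin N → ℕ} {TT : ℕ} (M : MDP N (TT+2) k) :
    Set (FreqSpace N k TT) :=
  {x | inP M x}

/-- The state-action frequency vector `x_π` of a policy, as a point of `FreqSpace`. -/
def xvec {N : ℕ} {k : Fin N → ℕ} {TT : ℕ} (M : MDP N (TT+2) k) (π : Policy N k) :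
    FreqSpace N k TT :=
  (fun t s a => xsa M π (t : ℕ) s a, fun s => xT M π s)

/-- The process is regular when every policy can reach every state at every epoch. -/
def RegularProcess {N : ℕ} {k : Fin N → ℕ} {TT : ℕ} (M : MDP N (TT+2) k) : Prop :=
  ∀ (π : Policy N k) (t : ℕ) (s : Fin N), t ≤ TT + 1 → ∃ j, 0 < condProb M π j t s

/-- A policy is deterministic (up to the horizon) if at every decision epoch and state it
puts probability one on a single action. -/
def Deterministic {N : ℕ} (k : Fin N → ℕ) (TT : ℕ) (π : Policy N k) : Prop :=
  ∀ t s, t ≤ TT → ∃ a, π.q t s a = 1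

/-- A policy is regular if at every decision epoch and every state unreachable there, it
puts full mass on the first action. -/
def RegularPol {N : ℕ} {k : Fin N → ℕ} {TT : ℕ} (M : MDP N (TT+2) k)
    (hk : ∀ s, 1 ≤ k s) (π : Policy N k) : Prop :=
  ∀ t s, t ≤ TT → (∀ j, condProb M π j t s = 0) → π.q t s ⟨0, hk s⟩ = 1

section Aux

lemma condProb_nonneg (M : MDP N T k) (π : Policy N k) (j : Fin N) :
    ∀ t s, 0 ≤ condProb M π j t s
  | 0, s => by simp only [condProb]; split <;> norm_num
  | t+1, s => Finset.sum_nonneg fun s' _ => Finset.sum_nonneg fun a _ =>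
      mul_nonneg (mul_nonneg (condProb_nonneg M π j t s') (π.q_nonneg _ _ _))
        (M.p_nonneg _ _ _ _)

lemma sum_xsa (M : MDP N T k) (π : Policy N k) (t : ℕ) (s : Fin N) :
    ∑ a, xsa M π t s a = ∑ j, M.α j * condProb M π j t s := by
  unfold xsa
  rw [Finset.sum_comm]
  refine Finset.sum_congr rfl fun j _ => ?_
  rw [← Finset.mul_sum, π.q_sum, mul_one]

lemma margin_zero (M : MDP N T k) (π : Policy N k) (s : Fin N) :
    ∑ j, M.α j * condProb M π j 0 s = M.α s := by
  simp only [condProb, mul_ite, mul_one, mul_zero]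
  rw [Finset.sum_ite_eq]
  simp

lemma margin_succ (M : MDP N T k) (π : Policy N k) (t : ℕ) (s : Fin N) :
    ∑ j, M.α j * condProb M π j (t+1) s
      = ∑ s', ∑ a, M.p t s' a s * xsa M π t s' a := by
  unfold xsa
  simp only [condProb, Finset.mul_sum, Finset.sum_mul]
  rw [Finset.sum_comm]
  refine Finset.sum_congr rfl fun s' _ => ?_
  rw [Finset.sum_comm]
  refine Finset.sum_congr rfl fun a _ => ?_
  refine Finset.sum_congr rfl fun j _ => ?_
  ring

end Aux
section Aux2

lemma xvec_mem {TT : ℕ} (M : MDP N (TT+2) k) (π : Policy N k) : xvec M π ∈ Pset M := by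
  refine ⟨?_, ?_, ?_, ?_, ?_⟩
  · intro t s a
    show (0:ℝ) ≤ xsa M π (t : ℕ) s a
    exact Finset.sum_nonneg fun j _ => mul_nonneg
      (mul_nonneg (M.α_pos j).le (condProb_nonneg M π j _ s)) (π.q_nonneg _ _ _)
  · intro s
    show (0:ℝ) ≤ xT M π s
    exact Finset.sum_nonneg fun j _ => mul_nonneg (M.α_pos j).le (condProb_nonneg M π j _ s)
  · intro j
    show ∑ a, xsa M π ((0 : Fin (TT+1)) : ℕ) j a = M.α j
    rw [sum_xsa]
    simp only [Fin.val_zero]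
    exact margin_zero M π j
  · intro t j
    show ∑ a, xsa M π ((t.succ : Fin (TT+1)) : ℕ) j a
      = ∑ s, ∑ a, M.p (t : ℕ) s a j * xsa M π ((t.castSucc : Fin (TT+1)) : ℕ) s a
    rw [sum_xsa]
    simp only [Fin.val_succ, Fin.coe_castSucc]
    exact margin_succ M π (t : ℕ) j
  · intro j
    show xT M π j = ∑ s, ∑ a, M.p TT s a j * xsa M π ((Fin.last TT : Fin (TT+1)) : ℕ) s a
    unfold xT
    simp only [Fin.val_last]
    have h2 : TT + 2 - 1 = TT + 1 := rfl
    rw [h2]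
    exact margin_succ M π TT j

end Aux2
section Aux3

/-- The conditional action distribution induced by a feasible point `x`. -/
noncomputable def indq {TT : ℕ} (hk : ∀ s, 1 ≤ k s) (x : FreqSpace N k TT) (t : ℕ) (s : Fin N)
    (a : Fin (k s)) : ℝ :=
  if ht : t < TT+1 then
    if 0 < ∑ b, x.1 ⟨t, ht⟩ s b then x.1 ⟨t, ht⟩ s a / ∑ b, x.1 ⟨t, ht⟩ s b
    else if a = ⟨0, hk s⟩ then 1 else 0
  else if a = ⟨0, hk s⟩ then 1 else 0

/-- The policy induced by a feasible point `x`. -/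
noncomputable def indPol {TT : ℕ} (M : MDP N (TT+2) k) (hk : ∀ s, 1 ≤ k s) (x : FreqSpace N k TT)
    (hx : x ∈ Pset M) : Policy N k where
  q := indq hk x
  q_nonneg := by
    intro t s a
    unfold indq
    split_ifs with h1 h2 h3 h4
    · exact div_nonneg (hx.1 _ s a) h2.le
    · norm_num
    · norm_num
    · norm_num
    · norm_num
  q_sum := by
    intro t s
    unfold indq
    by_cases ht : t < TT+1
    · simp only [dif_pos ht]
      by_cases hS : 0 < ∑ b, x.1 ⟨t, ht⟩ s b
      · simp only [if_pos hS]
        rw [← Finset.sum_div]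
        exact div_self (ne_of_gt hS)
      · simp only [if_neg hS]
        simp [Finset.sum_ite_eq']
    · simp only [dif_neg ht]
      simp [Finset.sum_ite_eq']

lemma mul_indq {TT : ℕ} (M : MDP N (TT+2) k) (hk : ∀ s, 1 ≤ k s) (x : FreqSpace N k TT)
    (hx : x ∈ Pset M) (t : ℕ) (ht : t < TT+1) (s : Fin N) (a : Fin (k s)) :
    (∑ b, x.1 ⟨t, ht⟩ s b) * indq hk x t s a = x.1 ⟨t, ht⟩ s a := by
  unfold indq
  rw [dif_pos ht]
  by_cases hS : 0 < ∑ b, x.1 ⟨t, ht⟩ s b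
  · rw [if_pos hS, mul_comm, div_mul_cancel₀ _ (ne_of_gt hS)]
  · have hS0 : ∑ b, x.1 ⟨t, ht⟩ s b = 0 :=
      le_antisymm (not_lt.1 hS) (Finset.sum_nonneg fun b _ => hx.1 _ s b)
    have hx0 : x.1 ⟨t, ht⟩ s a = 0 :=
      (Finset.sum_eq_zero_iff_of_nonneg fun b _ => hx.1 _ s b).1 hS0 a (Finset.mem_univ a)
    rw [hS0, hx0, zero_mul]

lemma indPol_margin {TT : ℕ} (M : MDP N (TT+2) k) (hk : ∀ s, 1 ≤ k s)
    (x : FreqSpace N k TT) (hx : x ∈ Pset M) :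
    ∀ (t : ℕ) (ht : t < TT+1) (s : Fin N),
      ∑ j, M.α j * condProb M (indPol M hk x hx) j t s = ∑ a, x.1 ⟨t, ht⟩ s a := by
  intro t
  induction t with
  | zero =>
    intro ht s
    rw [margin_zero]
    have h0 : (⟨0, ht⟩ : Fin (TT+1)) = 0 := by ext; simp
    rw [h0]
    exact (hx.2.2.1 s).symm
  | succ t ih =>
    intro ht s
    have htt : t < TT+1 := Nat.lt_of_succ_lt ht
    have htT : t < TT := by omega
    rw [margin_succ]
    have key : ∀ (s' : Fin N) (a : Fin (k s')),
        xsa M (indPol M hk x hx) t s' a = x.1 ⟨t, htt⟩ s' a := by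
      intro s' a
      unfold xsa
      rw [← Finset.sum_mul]
      have hq : (indPol M hk x hx).q t s' a = indq hk x t s' a := rfl
      rw [hq, ih htt s', mul_indq M hk x hx t htt s' a]
    have hstep := hx.2.2.2.1 ⟨t, htT⟩ s
    have h1 : (Fin.succ (⟨t, htT⟩ : Fin TT)) = (⟨t+1, ht⟩ : Fin (TT+1)) := rfl
    have h2 : (Fin.castSucc (⟨t, htT⟩ : Fin TT)) = (⟨t, htt⟩ : Fin (TT+1)) := rfl
    rw [h1, h2] at hstep
    rw [hstep]
    refine Finset.sum_congr rfl fun s' _ => Finset.sum_congr rfl fun a _ => ?_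
    rw [key s' a]

lemma indPol_xsa {TT : ℕ} (M : MDP N (TT+2) k) (hk : ∀ s, 1 ≤ k s)
    (x : FreqSpace N k TT) (hx : x ∈ Pset M) (t : ℕ) (ht : t < TT+1) (s : Fin N)
    (a : Fin (k s)) : xsa M (indPol M hk x hx) t s a = x.1 ⟨t, ht⟩ s a := by
  unfold xsa
  rw [← Finset.sum_mul]
  have hq : (indPol M hk x hx).q t s a = indq hk x t s a := rfl
  rw [hq, indPol_margin M hk x hx t ht s, mul_indq M hk x hx t ht s a]

lemma indPol_terminal {TT : ℕ} (M : MDP N (TT+2) k) (hk : ∀ s, 1 ≤ k s)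
    (x : FreqSpace N k TT) (hx : x ∈ Pset M) (s : Fin N) :
    xT M (indPol M hk x hx) s = x.2 s := by
  unfold xT
  have h2 : TT + 2 - 1 = TT + 1 := rfl
  rw [h2, margin_succ]
  rw [hx.2.2.2.2 s]
  refine Finset.sum_congr rfl fun s' _ => Finset.sum_congr rfl fun a _ => ?_
  rw [indPol_xsa M hk x hx TT (Nat.lt_succ_self TT) s' a]
  rfl

lemma xvec_indPol {TT : ℕ} (M : MDP N (TT+2) k) (hk : ∀ s, 1 ≤ k s)
    (x : FreqSpace N k TT) (hx : x ∈ Pset M) : x = xvec M (indPol M hk x hx) := by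
  refine Prod.ext ?_ ?_
  · funext t s a
    show x.1 t s a = xsa M (indPol M hk x hx) (t : ℕ) s a
    rw [indPol_xsa M hk x hx (t : ℕ) t.isLt s a, Fin.eta]
  · funext s
    exact (indPol_terminal M hk x hx s).symm

lemma margin_pos {TT : ℕ} (M : MDP N (TT+2) k) (hreg : RegularProcess M)
    (π : Policy N k) (t : ℕ) (ht : t ≤ TT+1) (s : Fin N) :
    0 < ∑ j, M.α j * condProb M π j t s := by
  obtain ⟨j0, hj0⟩ := hreg π t s ht
  refine Finset.sum_pos' (fun j _ => mul_nonneg (M.α_pos j).le (condProb_nonneg M π j t s))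
    ⟨j0, Finset.mem_univ j0, mul_pos (M.α_pos j0) hj0⟩

end Aux3
section Aux4

/-- The policy `π` modified to deterministically choose `a0` at epoch `t0`, state `s0`. -/
def modq (π : Policy N k) (t0 : ℕ) (s0 : Fin N) (a0 : Fin (k s0)) (t : ℕ) (s : Fin N)
    (a : Fin (k s)) : ℝ :=
  if t = t0 ∧ s = s0 then (if (a : ℕ) = (a0 : ℕ) then 1 else 0) else π.q t s a

def modPol (π : Policy N k) (t0 : ℕ) (s0 : Fin N) (a0 : Fin (k s0)) : Policy N k where
  q := modq π t0 s0 a0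
  q_nonneg := by
    intro t s a
    unfold modq
    split_ifs <;> first | exact π.q_nonneg _ _ _ | norm_num
  q_sum := by
    intro t s
    unfold modq
    by_cases h : t = t0 ∧ s = s0
    · obtain ⟨ht, hs⟩ := h
      subst hs
      simp only [ht, and_self, if_true, Fin.val_eq_val]
      simp [Finset.sum_ite_eq']
    · simp only [if_neg h]
      exact π.q_sum t s

lemma condProb_modPol_le (M : MDP N T k) (π : Policy N k) (t0 : ℕ) (s0 : Fin N)
    (a0 : Fin (k s0)) (j : Fin N) :
    ∀ t, t ≤ t0 → ∀ s, condProb M (modPol π t0 s0 a0) j t s = condProb M π j t s := by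
  intro t
  induction t with
  | zero => intro _ s; rfl
  | succ t ih =>
    intro ht s
    have htlt : t < t0 := Nat.lt_of_succ_le ht
    simp only [condProb]
    refine Finset.sum_congr rfl fun s' _ => Finset.sum_congr rfl fun a _ => ?_
    rw [ih htlt.le s']
    have hq : (modPol π t0 s0 a0).q t s' a = π.q t s' a := by
      show modq π t0 s0 a0 t s' a = π.q t s' a
      unfold modq
      rw [if_neg (by exact fun hc => absurd hc.1 (Nat.ne_of_lt htlt))]
    rw [hq]

lemma condProb_modPol_sum (M : MDP N T k) (π : Policy N k) (t0 : ℕ) (s0 : Fin N)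
    (j : Fin N) :
    ∀ t, t0 < t → ∀ s,
      ∑ a0, π.q t0 s0 a0 * condProb M (modPol π t0 s0 a0) j t s = condProb M π j t s := by
  intro t
  induction t with
  | zero => intro ht; omega
  | succ t ih =>
    intro ht s
    by_cases hc : t0 < t
    · -- epoch t is past t0: propagate
      simp only [condProb, Finset.mul_sum]
      rw [Finset.sum_comm]
      refine Finset.sum_congr rfl fun s' _ => ?_
      rw [Finset.sum_comm]
      refine Finset.sum_congr rfl fun b _ => ?_
      have hq : ∀ a0 : Fin (k s0), (modPol π t0 s0 a0).q t s' b = π.q t s' b := by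
        intro a0
        show modq π t0 s0 a0 t s' b = π.q t s' b
        unfold modq
        rw [if_neg (by exact fun hcc => absurd hcc.1 (Nat.ne_of_gt hc))]
      calc ∑ a0, π.q t0 s0 a0 * (condProb M (modPol π t0 s0 a0) j t s' *
              (modPol π t0 s0 a0).q t s' b * M.p t s' b s)
          = (∑ a0, π.q t0 s0 a0 * condProb M (modPol π t0 s0 a0) j t s') *
              (π.q t s' b * M.p t s' b s) := by
            rw [Finset.sum_mul]
            refine Finset.sum_congr rfl fun a0 _ => ?_
            rw [hq a0]; ring
        _ = condProb M π j t s' * π.q t s' b * M.p t s' b s := by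
            rw [ih hc s']; ring
    · -- t = t0 : the modified epoch
      have hteq : t = t0 := by omega
      subst hteq
      simp only [condProb]
      have hcp : ∀ (a0 : Fin (k s0)) (s' : Fin N),
          condProb M (modPol π t s0 a0) j t s' = condProb M π j t s' := fun a0 s' =>
        condProb_modPol_le M π t s0 a0 j t le_rfl s'
      -- split each inner sum at s' = s0
      have hsplit : ∀ a0 : Fin (k s0),
          ∑ s', ∑ b, condProb M (modPol π t s0 a0) j t s' *
              (modPol π t s0 a0).q t s' b * M.p t s' b s
          = condProb M π j t s0 * M.p t s0 a0 s +
            ∑ s' ∈ Finset.univ.erase s0, ∑ b,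
              condProb M π j t s' * π.q t s' b * M.p t s' b s := by
        intro a0
        rw [← Finset.add_sum_erase _ _ (Finset.mem_univ s0)]
        congr 1
        · -- the s0 term
          have : ∀ b : Fin (k s0), (modPol π t s0 a0).q t s0 b
              = (if (b : ℕ) = (a0 : ℕ) then 1 else 0) := by
            intro b
            show modq π t s0 a0 t s0 b = _
            unfold modq
            rw [if_pos ⟨rfl, rfl⟩]
          simp only [this, hcp a0 s0, Fin.val_eq_val, mul_ite, mul_one, mul_zero,
            ite_mul, zero_mul]
          rw [Finset.sum_ite_eq' Finset.univ a0]
          simp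
        · refine Finset.sum_congr rfl fun s' hs' => Finset.sum_congr rfl fun b _ => ?_
          have hs'ne : s' ≠ s0 := (Finset.mem_erase.1 hs').1
          have hq : (modPol π t s0 a0).q t s' b = π.q t s' b := by
            show modq π t s0 a0 t s' b = π.q t s' b
            unfold modq
            rw [if_neg (fun hcc => hs'ne hcc.2)]
          rw [hcp a0 s', hq]
      calc ∑ a0, π.q t s0 a0 * ∑ s', ∑ b, condProb M (modPol π t s0 a0) j t s' *
              (modPol π t s0 a0).q t s' b * M.p t s' b s
          = ∑ a0, π.q t s0 a0 * (condProb M π j t s0 * M.p t s0 a0 s +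
              ∑ s' ∈ Finset.univ.erase s0, ∑ b,
                condProb M π j t s' * π.q t s' b * M.p t s' b s) := by
            refine Finset.sum_congr rfl fun a0 _ => ?_
            rw [hsplit a0]
        _ = ∑ a0, condProb M π j t s0 * π.q t s0 a0 * M.p t s0 a0 s +
              ∑ s' ∈ Finset.univ.erase s0, ∑ b,
                condProb M π j t s' * π.q t s' b * M.p t s' b s := by
            simp only [mul_add]
            rw [Finset.sum_add_distrib, ← Finset.sum_mul, π.q_sum, one_mul]
            congr 1
            refine Finset.sum_congr rfl fun a0 _ => ?_
            ring
        _ = ∑ s', ∑ b, condProb M π j t s' * π.q t s' b * M.p t s' b s := by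
            rw [← Finset.add_sum_erase _ _ (Finset.mem_univ s0)]

end Aux4
section Aux5

lemma freq_sum_fst {TT n : ℕ} (f : Fin n → FreqSpace N k TT) (t : Fin (TT+1)) (s : Fin N)
    (a : Fin (k s)) : (∑ i, f i).1 t s a = ∑ i, (f i).1 t s a := by
  simp [Prod.fst_sum, Finset.sum_apply]

lemma freq_sum_snd {TT n : ℕ} (f : Fin n → FreqSpace N k TT) (s : Fin N) :
    (∑ i, f i).2 s = ∑ i, (f i).2 s := by
  simp [Prod.snd_sum, Finset.sum_apply]

lemma xvec_comb {TT : ℕ} (M : MDP N (TT+2) k) (π : Policy N k) (t0 : ℕ) (ht0 : t0 ≤ TT)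
    (s0 : Fin N) :
    xvec M π = ∑ a0, π.q t0 s0 a0 • xvec M (modPol π t0 s0 a0) := by
  refine Prod.ext ?_ ?_
  · funext t s a
    rw [freq_sum_fst]
    simp only [Prod.smul_fst, Pi.smul_apply, smul_eq_mul]
    show xsa M π (t : ℕ) s a = ∑ a0, π.q t0 s0 a0 * xsa M (modPol π t0 s0 a0) (t : ℕ) s a
    by_cases hgt : t0 < (t : ℕ)
    · -- strictly after the modified epoch
      have hq' : ∀ a0 : Fin (k s0), (modPol π t0 s0 a0).q (t:ℕ) s a = π.q (t:ℕ) s a := by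
        intro a0
        show modq π t0 s0 a0 _ s a = _
        unfold modq
        rw [if_neg (fun hcc => absurd hcc.1 (Nat.ne_of_gt hgt))]
      symm
      calc ∑ a0, π.q t0 s0 a0 * xsa M (modPol π t0 s0 a0) (t:ℕ) s a
          = ∑ j, (∑ a0, π.q t0 s0 a0 * condProb M (modPol π t0 s0 a0) j (t:ℕ) s) *
              (M.α j * π.q (t:ℕ) s a) := by
            unfold xsa
            simp only [hq', Finset.mul_sum]
            rw [Finset.sum_comm]
            refine Finset.sum_congr rfl fun j _ => ?_
            rw [Finset.sum_mul]
            refine Finset.sum_congr rfl fun a0 _ => ?_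
            ring
        _ = ∑ j, M.α j * condProb M π j (t:ℕ) s * π.q (t:ℕ) s a := by
            refine Finset.sum_congr rfl fun j _ => ?_
            rw [condProb_modPol_sum M π t0 s0 j (t:ℕ) hgt s]
            ring
        _ = xsa M π (t:ℕ) s a := rfl
    · by_cases hts : (t:ℕ) = t0 ∧ s = s0
      · -- the modified epoch and state
        obtain ⟨ht1, hs1⟩ := hts
        subst hs1
        symm
        calc ∑ a0, π.q t0 s a0 * xsa M (modPol π t0 s a0) (t:ℕ) s a
            = ∑ a0, π.q t0 s a0 * ((∑ j, M.α j * condProb M π j (t:ℕ) s) *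
                (if (a:ℕ) = (a0:ℕ) then (1:ℝ) else 0)) := by
              refine Finset.sum_congr rfl fun a0 _ => ?_
              congr 1
              unfold xsa
              rw [Finset.sum_mul]
              refine Finset.sum_congr rfl fun j _ => ?_
              rw [condProb_modPol_le M π t0 s a0 j (t:ℕ) (le_of_eq ht1) s]
              congr 1
              show modq π t0 s a0 (t:ℕ) s a = _
              unfold modq
              rw [if_pos ⟨ht1, rfl⟩]
          _ = π.q t0 s a * (∑ j, M.α j * condProb M π j (t:ℕ) s) := by
              simp only [Fin.val_eq_val, mul_ite, mul_one, mul_zero]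
              rw [Finset.sum_ite_eq Finset.univ a]
              simp
          _ = xsa M π (t:ℕ) s a := by
              unfold xsa
              rw [← Finset.sum_mul, ht1, mul_comm]
      · -- at or before the modified epoch, but untouched
        have hle : (t:ℕ) ≤ t0 := not_lt.1 hgt
        have heq : ∀ a0 : Fin (k s0),
            xsa M (modPol π t0 s0 a0) (t:ℕ) s a = xsa M π (t:ℕ) s a := by
          intro a0
          unfold xsa
          refine Finset.sum_congr rfl fun j _ => ?_
          rw [condProb_modPol_le M π t0 s0 a0 j (t:ℕ) hle s]
          congr 1
          show modq π t0 s0 a0 (t:ℕ) s a = _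
          unfold modq
          rw [if_neg hts]
        simp only [heq]
        rw [← Finset.sum_mul, π.q_sum, one_mul]
  · funext s
    rw [freq_sum_snd]
    simp only [Prod.smul_snd, Pi.smul_apply, smul_eq_mul]
    show xT M π s = ∑ a0, π.q t0 s0 a0 * xT M (modPol π t0 s0 a0) s
    have hgt : t0 < TT + 1 := Nat.lt_succ_of_le ht0
    unfold xT
    have h2 : TT + 2 - 1 = TT + 1 := rfl
    simp only [h2, Finset.mul_sum]
    symm
    rw [Finset.sum_comm]
    refine Finset.sum_congr rfl fun j _ => ?_
    calc ∑ a0, π.q t0 s0 a0 * (M.α j * condProb M (modPol π t0 s0 a0) j (TT+1) s)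
        = M.α j * ∑ a0, π.q t0 s0 a0 * condProb M (modPol π t0 s0 a0) j (TT+1) s := by
          rw [Finset.mul_sum]
          refine Finset.sum_congr rfl fun a0 _ => ?_
          ring
      _ = M.α j * condProb M π j (TT+1) s := by
          rw [condProb_modPol_sum M π t0 s0 j (TT+1) hgt s]

end Aux5
section Aux6

lemma convex_Pset {TT : ℕ} (M : MDP N (TT+2) k) : Convex ℝ (Pset M) := by
  intro y hy z hz a b ha hb hab
  have hco : ∀ (t : Fin (TT+1)) (s : Fin N) (c : Fin (k s)),
      (a • y + b • z).1 t s c = a * y.1 t s c + b * z.1 t s c := by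
    intro t s c
    simp [Prod.fst_add, Prod.smul_fst, Pi.add_apply, Pi.smul_apply, smul_eq_mul]
  have hco2 : ∀ s : Fin N, (a • y + b • z).2 s = a * y.2 s + b * z.2 s := by
    intro s
    simp [Prod.snd_add, Prod.smul_snd, Pi.add_apply, Pi.smul_apply, smul_eq_mul]
  refine ⟨?_, ?_, ?_, ?_, ?_⟩
  · intro t s c
    rw [hco]
    exact add_nonneg (mul_nonneg ha (hy.1 t s c)) (mul_nonneg hb (hz.1 t s c))
  · intro s
    rw [hco2]
    exact add_nonneg (mul_nonneg ha (hy.2.1 s)) (mul_nonneg hb (hz.2.1 s))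
  · intro j
    simp only [hco]
    rw [Finset.sum_add_distrib, ← Finset.mul_sum, ← Finset.mul_sum, hy.2.2.1 j, hz.2.2.1 j,
      ← add_mul, hab, one_mul]
  · intro t j
    simp only [hco]
    rw [Finset.sum_add_distrib, ← Finset.mul_sum, ← Finset.mul_sum, hy.2.2.2.1 t j,
      hz.2.2.2.1 t j, Finset.mul_sum, Finset.mul_sum, ← Finset.sum_add_distrib]
    refine Finset.sum_congr rfl fun s _ => ?_
    rw [Finset.mul_sum, Finset.mul_sum, ← Finset.sum_add_distrib]
    refine Finset.sum_congr rfl fun c _ => ?_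
    ring
  · intro j
    simp only [hco, hco2]
    rw [hy.2.2.2.2 j, hz.2.2.2.2 j, Finset.mul_sum, Finset.mul_sum,
      ← Finset.sum_add_distrib]
    refine Finset.sum_congr rfl fun s _ => ?_
    rw [Finset.mul_sum, Finset.mul_sum, ← Finset.sum_add_distrib]
    refine Finset.sum_congr rfl fun c _ => ?_
    ring

end Aux6
/-- if the vMDP is regular then every basic feasible solution (vertex /
extreme point) `x` of the state-action frequency polytope has, at each decision epoch `t`
and state `s`, exactly one action `a'` with `x.1 t s a' > 0`, all other actions having
frequency zero. -/
theorem vertex_unique_positive_action (N TT : ℕ) (k : Fin N → ℕ) (hk : ∀ s, 1 ≤ k s)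
    (M : MDP N (TT+2) k) (hreg : RegularProcess M)
    (x : FreqSpace N k TT) (hx : x ∈ Set.extremePoints ℝ (Pset M)) :
    ∀ (t : Fin (TT+1)) (s : Fin N), ∃ a' : Fin (k s),
      0 < x.1 t s a' ∧ ∀ a : Fin (k s), a ≠ a' → x.1 t s a = 0 := by
  obtain ⟨hxP', hext⟩ := hx
  intro t s
  set π := indPol M hk x hxP' with hπ
  have hxeq : x = xvec M π := xvec_indPol M hk x hxP'
  have hSpos : 0 < ∑ b, x.1 t s b := by
    have h := margin_pos M hreg π (t:ℕ) (t.isLt.le) s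
    rw [indPol_margin M hk x hxP' (t:ℕ) t.isLt s, Fin.eta] at h
    exact h
  obtain ⟨a', ha'⟩ : ∃ a', 0 < x.1 t s a' := by
    by_contra h
    push_neg at h
    exact absurd (Finset.sum_nonpos fun b _ => h b) (not_le.2 hSpos)
  refine ⟨a', ha', fun a hne => ?_⟩
  by_contra h0
  have ha : 0 < x.1 t s a := lt_of_le_of_ne (hxP'.1 t s a) (Ne.symm h0)
  set w : Fin (k s) → ℝ := fun b => π.q (t:ℕ) s b with hw
  set z : Fin (k s) → FreqSpace N k TT := fun b => xvec M (modPol π (t:ℕ) s b) with hz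
  have hcomb : x = ∑ b, w b • z b := by
    rw [hxeq]
    exact xvec_comb M π (t:ℕ) (Nat.lt_succ_iff.mp t.isLt) s
  have hwq : ∀ b, (∑ c, x.1 t s c) * w b = x.1 t s b := by
    intro b
    have h := mul_indq M hk x hxP' (t:ℕ) t.isLt s b
    rw [Fin.eta] at h
    exact h
  have hw_pos : ∀ b, 0 < x.1 t s b → 0 < w b := by
    intro b hb
    have h1 := hwq b
    nlinarith [hSpos, hb]
  have hwa' : 0 < w a' := hw_pos a' ha'
  have hwa : 0 < w a := hw_pos a ha
  have hwnn : ∀ b, 0 ≤ w b := fun b => π.q_nonneg _ _ _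
  have hwsum : ∑ b, w b = 1 := π.q_sum _ _
  have herase := Finset.add_sum_erase Finset.univ w (Finset.mem_univ a')
  have hc1 : w a' < 1 := by
    have hmem : a ∈ Finset.univ.erase a' := Finset.mem_erase.2 ⟨hne, Finset.mem_univ a⟩
    have h3 : w a ≤ ∑ b ∈ Finset.univ.erase a', w b :=
      Finset.single_le_sum (fun b _ => hwnn b) hmem
    rw [hwsum] at herase
    linarith
  have hrest : ∑ b ∈ Finset.univ.erase a', w b = 1 - w a' := by
    rw [hwsum] at herase
    linarith
  have h1c : 0 < 1 - w a' := by linarith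
  set y2 := (1 - w a')⁻¹ • ∑ b ∈ Finset.univ.erase a', w b • z b with hy2
  have hy2mem : y2 ∈ Pset M := by
    have hrw : y2 = ∑ b ∈ Finset.univ.erase a', ((1 - w a')⁻¹ * w b) • z b := by
      rw [hy2, Finset.smul_sum]
      refine Finset.sum_congr rfl fun b _ => ?_
      rw [smul_smul]
    rw [hrw]
    refine (convex_Pset M).sum_mem
      (fun b _ => mul_nonneg (by positivity) (hwnn b)) ?_ (fun b _ => xvec_mem M _)
    rw [← Finset.mul_sum, hrest, inv_mul_cancel₀ (ne_of_gt h1c)]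
  have hseg : x ∈ openSegment ℝ (z a') y2 := by
    refine ⟨w a', 1 - w a', hwa', h1c, by ring, ?_⟩
    rw [hy2, smul_inv_smul₀ (ne_of_gt h1c), hcomb]
    exact Finset.add_sum_erase Finset.univ (fun b => w b • z b) (Finset.mem_univ a')
  obtain ⟨hz1, -⟩ := (mem_extremePoints.1 ⟨hxP', hext⟩).2 _ (xvec_mem M _) _ hy2mem hseg
  have hzero : (z a').1 t s a = 0 := by
    show xsa M (modPol π (t:ℕ) s a') (t:ℕ) s a = 0
    unfold xsa
    refine Finset.sum_eq_zero fun j _ => ?_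
    have hq0 : (modPol π (t:ℕ) s a').q (t:ℕ) s a = 0 := by
      show modq π (t:ℕ) s a' (t:ℕ) s a = 0
      unfold modq
      rw [if_pos ⟨rfl, rfl⟩, if_neg (fun h => hne (Fin.ext h))]
    rw [hq0, mul_zero]
  have hzx : z a' = x := hz1
  rw [hzx] at hzero
  exact absurd hzero (ne_of_gt ha)
end

section
/- Given any selection of actions a_{st} ∈ A_s for every state s and epoch t = 1,...,T-1, there exists a unique state-action frequency vector x ∈ P with x_t(s,a') = 0 for all a' ≠ a_{st}; moreover this x is a vertex of P. It is determined by the recursion x_1(j,a_{j1}) = α(j), x_{t+1}(j,a_{j,t+1}) = ∑_s p_t(j|s,a_{st}) x_t(s,a_{st}), and x_T(j) = ∑_s p_{T-1}(j|s,a_{s,T-1}) x_{T-1}(s,a_{s,T-1}). -/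
open Finset

variable {N T : ℕ} {k : Fin N → ℕ}

variable (TT : ℕ)

noncomputable def Fseq {N : ℕ} {k : Fin N → ℕ} {TT : ℕ} (M : MDP N (TT+2) k)
    (σ' : ℕ → (s : Fin N) → Fin (k s)) : ℕ → Fin N → ℝ
  | 0 => M.α
  | (t+1) => fun j => ∑ s, M.p t s (σ' t s) j * Fseq M σ' t s

lemma Fseq_nonneg {N : ℕ} {k : Fin N → ℕ} {TT : ℕ} (M : MDP N (TT+2) k)
    (σ' : ℕ → (s : Fin N) → Fin (k s)) : ∀ t s, 0 ≤ Fseq M σ' t s := by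
  intro t
  induction t with
  | zero => exact fun s => (M.α_pos s).le
  | succ t ih =>
    intro s
    exact Finset.sum_nonneg fun i _ => mul_nonneg (M.p_nonneg _ _ _ _) (ih i)

lemma sum_single_off {m : ℕ} (w : Fin m → ℝ) (g : Fin m → ℝ) (c : Fin m)
    (h : ∀ b, b ≠ c → w b = 0) : ∑ b, g b * w b = g c * w c := by
  refine Finset.sum_eq_single c (fun b _ hb => by rw [h b hb, mul_zero])
    (fun hc => absurd (Finset.mem_univ c) hc)

/-- given a selection `σ` of one action per state and decision epoch, there
is a unique state-action frequency vector `x ∈ P` vanishing at all non-selected actions;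
it is a vertex (extreme point) of `P`, and it satisfies the explicit recursion
`x_0(j, σ_0(j)) = α(j)`,
`x_{t+1}(j, σ_{t+1}(j)) = ∑_s p_t(j|s, σ_t(s)) x_t(s, σ_t(s))`, and
`x_T(j) = ∑_s p_{T-1}(j|s, σ_{T-1}(s)) x_{T-1}(s, σ_{T-1}(s))`. -/
theorem selection_vertex (N TT : ℕ) (k : Fin N → ℕ) (hk : ∀ s, 1 ≤ k s)
    (M : MDP N (TT+2) k) (σ : Fin (TT+1) → (s : Fin N) → Fin (k s)) :
    ∃ x : FreqSpace N k TT,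
      (inP M x ∧ (∀ t s a', a' ≠ σ t s → x.1 t s a' = 0) ∧
        x ∈ Set.extremePoints ℝ (Pset M) ∧
        (∀ j, x.1 0 j (σ 0 j) = M.α j) ∧
        (∀ (t : Fin TT) (j : Fin N), x.1 t.succ j (σ t.succ j) =
          ∑ s, M.p (t : ℕ) s (σ t.castSucc s) j * x.1 t.castSucc s (σ t.castSucc s)) ∧
        (∀ j, x.2 j =
          ∑ s, M.p TT s (σ (Fin.last TT) s) j * x.1 (Fin.last TT) s (σ (Fin.last TT) s))) ∧
      ∀ y : FreqSpace N k TT, inP M y →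
        (∀ t s a', a' ≠ σ t s → y.1 t s a' = 0) → y = x := by
  classical
  set σ' : ℕ → (s : Fin N) → Fin (k s) :=
    fun t s => σ ⟨min t TT, by omega⟩ s with hσ'def
  have hσ' : ∀ (t : Fin (TT+1)) (s : Fin N), σ' (t : ℕ) s = σ t s := by
    intro t s
    have : (⟨min (t : ℕ) TT, by omega⟩ : Fin (TT+1)) = t :=
      Fin.ext (Nat.min_eq_left (Nat.lt_succ_iff.mp t.isLt))
    simp [hσ'def, this]
  set F : ℕ → Fin N → ℝ := Fseq M σ' with hFdef
  have hF0 : ∀ j, F 0 j = M.α j := fun j => rfl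
  have hFs : ∀ t j, F (t+1) j = ∑ s, M.p t s (σ' t s) j * F t s := fun t j => rfl
  have hFnn : ∀ t s, 0 ≤ F t s := Fseq_nonneg M σ'
  set x : FreqSpace N k TT :=
    (fun t s a => if a = σ t s then F (t : ℕ) s else 0, fun j => F (TT+1) j) with hxdef
  have hvan : ∀ t s a', a' ≠ σ t s → x.1 t s a' = 0 := by
    intro t s a' ha'; simp [hxdef, ha']
  have hdiag : ∀ t s, x.1 t s (σ t s) = F (t : ℕ) s := by
    intro t s; simp [hxdef]
  have hsum1 : ∀ t s, ∑ a, x.1 t s a = F (t : ℕ) s := by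
    intro t s; simp [hxdef]
  have hsum2 : ∀ (t' : ℕ) (t : Fin (TT+1)) (s j : Fin N),
      ∑ a, M.p t' s a j * x.1 t s a = M.p t' s (σ t s) j * F (t : ℕ) s := by
    intro t' t s j
    rw [sum_single_off _ _ (σ t s) (hvan t s), hdiag]
  have hinP : inP M x := by
    refine ⟨?_, ?_, ?_, ?_, ?_⟩
    · intro t s a
      by_cases h : a = σ t s
      · rw [h, hdiag]; exact hFnn _ _
      · rw [hvan t s a h]
    · intro s; exact hFnn _ _
    · intro j; rw [hsum1]; exact hF0 j
    · intro t j
      rw [hsum1]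
      have h1 : ((t.succ : Fin (TT+1)) : ℕ) = (t : ℕ) + 1 := rfl
      rw [h1, hFs]
      refine Finset.sum_congr rfl fun s _ => ?_
      rw [hsum2]
      have e : σ' ((t : ℕ)) s = σ t.castSucc s := by simpa using hσ' t.castSucc s
      rw [e, Fin.coe_castSucc]
    · intro j
      have h1 : x.2 j = F (TT+1) j := rfl
      rw [h1, hFs]
      refine Finset.sum_congr rfl fun s _ => ?_
      rw [hsum2]
      have e : σ' TT s = σ (Fin.last TT) s := by simpa using hσ' (Fin.last TT) s
      rw [e, Fin.val_last]
  -- uniqueness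
  have uniq : ∀ y : FreqSpace N k TT, inP M y →
      (∀ t s a', a' ≠ σ t s → y.1 t s a' = 0) → y = x := by
    intro y hy hyv
    obtain ⟨hynn, hynn2, hy0, hyb, hyc⟩ := hy
    have key : ∀ (t : ℕ) (ht : t < TT+1) (s : Fin N),
        y.1 ⟨t, ht⟩ s (σ ⟨t, ht⟩ s) = F t s := by
      intro t
      induction t with
      | zero =>
        intro ht j
        have h0 : (0 : Fin (TT+1)) = ⟨0, ht⟩ := rfl
        have hs : ∑ a, y.1 ⟨0, ht⟩ j a = y.1 ⟨0, ht⟩ j (σ ⟨0, ht⟩ j) := by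
          have := sum_single_off (y.1 ⟨0, ht⟩ j) (fun _ => (1:ℝ)) (σ ⟨0, ht⟩ j)
            (hyv ⟨0, ht⟩ j)
          simpa using this
        have h1 := hy0 j
        rw [h0] at h1
        rw [← hs, h1, hF0]
      | succ t ih =>
        intro ht j
        have ht' : t < TT := by omega
        set tf : Fin TT := ⟨t, ht'⟩ with htf
        have hsucc : tf.succ = ⟨t+1, ht⟩ := rfl
        have hcast : tf.castSucc = (⟨t, by omega⟩ : Fin (TT+1)) := rfl
        have hb := hyb tf j
        rw [hsucc, hcast] at hb
        have hL : ∑ a, y.1 ⟨t+1, ht⟩ j a = y.1 ⟨t+1, ht⟩ j (σ ⟨t+1, ht⟩ j) := by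
          have := sum_single_off (y.1 ⟨t+1, ht⟩ j) (fun _ => (1:ℝ)) (σ ⟨t+1, ht⟩ j)
            (hyv ⟨t+1, ht⟩ j)
          simpa using this
        have hR : ∀ s : Fin N, ∑ a, M.p (tf : ℕ) s a j * y.1 ⟨t, by omega⟩ s a
            = M.p t s (σ' t s) j * F t s := by
          intro s
          rw [sum_single_off _ _ (σ ⟨t, by omega⟩ s) (hyv ⟨t, by omega⟩ s),
            ih (by omega) s]
          have : σ' t s = σ (⟨t, by omega⟩ : Fin (TT+1)) s := by
            have := hσ' (⟨t, by omega⟩ : Fin (TT+1)) s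
            simpa using this
          rw [this]
        rw [hL] at hb
        rw [hb, hFs]
        exact Finset.sum_congr rfl fun s _ => hR s
    refine Prod.ext ?_ ?_
    · funext t s a
      by_cases h : a = σ t s
      · subst h
        have h1 : (⟨(t : ℕ), t.isLt⟩ : Fin (TT+1)) = t := Fin.eta t t.isLt
        have := key (t : ℕ) t.isLt s
        rw [h1] at this
        rw [this, hdiag]
      · rw [hyv t s a h, hvan t s a h]
    · funext j
      have hlast : (Fin.last TT) = (⟨TT, by omega⟩ : Fin (TT+1)) := rfl
      have hc := hyc j
      have hR : ∀ s : Fin N, ∑ a, M.p TT s a j * y.1 (Fin.last TT) s a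
          = M.p TT s (σ' TT s) j * F TT s := by
        intro s
        rw [sum_single_off _ _ (σ (Fin.last TT) s) (hyv (Fin.last TT) s)]
        rw [hlast, key TT (by omega) s]
        have : σ' TT s = σ (Fin.last TT) s := by
          have := hσ' (Fin.last TT) s
          simpa using this
        rw [this, hlast]
      have : y.2 j = F (TT+1) j := by
        rw [hc, hFs]
        exact Finset.sum_congr rfl fun s _ => hR s
      rw [this]
  -- extremality
  have hext : x ∈ Set.extremePoints ℝ (Pset M) := by
    refine ⟨hinP, ?_⟩
    intro y₁ hy₁ y₂ hy₂ hseg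
    obtain ⟨a, b, ha, hb, hab, hsum⟩ := hseg
    have hvan' : ∀ (z : FreqSpace N k TT), inP M z →
        (∀ t s a', a' ≠ σ t s → a * z.1 t s a' + b * (if z = z then y₂ else y₂).1 t s a' = 0) →
        True := fun _ _ _ => trivial
    have hzero : ∀ t s a', a' ≠ σ t s → y₁.1 t s a' = 0 ∧ y₂.1 t s a' = 0 := by
      intro t s a' ha'
      have hcomp : a * y₁.1 t s a' + b * y₂.1 t s a' = 0 := by
        have := congrArg (fun z : FreqSpace N k TT => z.1 t s a') hsum
        simp only [Prod.fst_add, Prod.smul_fst, Pi.add_apply, Pi.smul_apply,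
          smul_eq_mul] at this
        rw [this, hvan t s a' ha']
      have h1 : 0 ≤ a * y₁.1 t s a' := mul_nonneg ha.le (hy₁.1 t s a')
      have h2 : 0 ≤ b * y₂.1 t s a' := mul_nonneg hb.le (hy₂.1 t s a')
      have e1 : a * y₁.1 t s a' = 0 := by linarith
      have e2 : b * y₂.1 t s a' = 0 := by linarith
      exact ⟨(mul_eq_zero.mp e1).resolve_left (ne_of_gt ha),
        (mul_eq_zero.mp e2).resolve_left (ne_of_gt hb)⟩
    exact uniq y₁ hy₁ (fun t s a' h => (hzero t s a' h).1)
  refine ⟨x, ⟨hinP, hvan, hext, ?_, ?_, ?_⟩, uniq⟩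
  · intro j; rw [hdiag]; exact hF0 j
  · intro t j
    rw [hdiag]
    have h1 : ((t.succ : Fin (TT+1)) : ℕ) = (t : ℕ) + 1 := rfl
    rw [h1, hFs]
    refine Finset.sum_congr rfl fun s _ => ?_
    rw [hdiag]
    have e : σ' ((t : ℕ)) s = σ t.castSucc s := by simpa using hσ' t.castSucc s
    rw [e, Fin.coe_castSucc]
  · intro j
    have h1 : x.2 j = F (TT+1) j := rfl
    rw [h1, hFs]
    refine Finset.sum_congr rfl fun s _ => ?_
    rw [hdiag]
    have e : σ' TT s = σ (Fin.last TT) s := by simpa using hσ' (Fin.last TT) s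
    rw [e, Fin.val_last]
end
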